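/- Let f : ℕ → ℝ be a function satisfying f(U) ≤ f(⌈Real.sqrt U⌉) + c · Real.logb 2 U for all U ≥ 4, and f(U) ≤ c for all U < 4, where c ≥ 0. Then f(U) ≤ 3 · c · Real.logb 2 U for all U ≥ 4. -/

import Mathlib

theorem stmt_0 (f : ℕ → ℝ) (c : ℝ) (hc : 0 ≤ c)
    (hrec : ∀ U : ℕ, 4 ≤ U → f U ≤ f ⌈Real.sqrt U⌉₊ + c * Real.logb 2 U)
    (hbase : ∀ U : ℕ, U < 4 → f U ≤ c) :
    ∀ U : ℕ, 4 ≤ U → f U ≤ 3 * c * Real.logb 2 U := by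
  intro U
  induction U using Nat.strong_induction_on with
  | _ U IH =>
    intro hU
    have hU4 : (4:ℝ) ≤ (U:ℝ) := by exact_mod_cast hU
    have hUpos : (0:ℝ) < (U:ℝ) := by linarith
    have hL : (2:ℝ) ≤ Real.logb 2 (U:ℝ) := by
      have h4 : Real.logb 2 (4:ℝ) = 2 := by
        rw [show (4:ℝ) = 2 ^ (2:ℕ) by norm_num, Real.logb_pow, Real.logb_self_eq_one] <;> norm_num
      calc (2:ℝ) = Real.logb 2 4 := h4.symm
        _ ≤ Real.logb 2 U := Real.logb_le_logb_of_le (by norm_num) (by norm_num) hU4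
    set m := ⌈Real.sqrt U⌉₊ with hm
    have hrecU := hrec U hU
    have hsqrt_lt : (m:ℝ) < Real.sqrt U + 1 := Nat.ceil_lt_add_one (Real.sqrt_nonneg _)
    have hs2 : 2 ≤ Real.sqrt U := by
      have := Real.sqrt_le_sqrt hU4
      simpa [Real.sqrt_eq_iff_eq_sq, show Real.sqrt 4 = 2 by
        rw [show (4:ℝ) = 2^2 by norm_num, Real.sqrt_sq (by norm_num : (0:ℝ) ≤ 2)]] using this
    have hsq : Real.sqrt U ^ 2 = (U:ℝ) := Real.sq_sqrt (le_of_lt hUpos)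
    have hmltU : m < U := by
      have : (m:ℝ) < (U:ℝ) := by nlinarith
      exact_mod_cast this
    by_cases hm4 : m < 4
    · have hb := hbase m hm4
      nlinarith
    · push_neg at hm4
      have hIH := IH m hmltU hm4
      have hs3 : 3 ≤ Real.sqrt U := by
        by_contra h
        push_neg at h
        have : m ≤ 3 := by
          have h3 : (⌈Real.sqrt U⌉₊ : ℕ) ≤ ⌈(3:ℝ)⌉₊ := Nat.ceil_le_ceil h.le
          have h4 : ⌈(3:ℝ)⌉₊ = 3 := by norm_num
          omega
        omega
      have hmpos : (0:ℝ) < (m:ℝ) := by positivity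
      have hm3 : (m:ℝ)^3 ≤ (U:ℝ)^2 := by
        have h1 : (m:ℝ)^3 ≤ (Real.sqrt U + 1)^3 :=
          pow_le_pow_left₀ (by positivity) hsqrt_lt.le 3
        have h2 : (Real.sqrt U + 1)^3 ≤ (Real.sqrt U)^4 := by
          nlinarith [mul_nonneg (sub_nonneg.mpr hs3) (pow_nonneg (Real.sqrt_nonneg (U:ℝ)) 3),
            mul_nonneg (sub_nonneg.mpr hs3) (pow_nonneg (Real.sqrt_nonneg (U:ℝ)) 2),
            mul_nonneg (sub_nonneg.mpr hs3) (Real.sqrt_nonneg (U:ℝ))]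
        have hU2 : (U:ℝ)^2 = Real.sqrt U ^ 4 := by nth_rewrite 1 [← hsq]; ring
        linarith
      have hlogm : Real.logb 2 (m:ℝ) ≤ (2/3) * Real.logb 2 (U:ℝ) := by
        have h1 : Real.logb 2 ((m:ℝ)^3) ≤ Real.logb 2 ((U:ℝ)^2) :=
          Real.logb_le_logb_of_le (by norm_num) (by positivity) hm3
        rw [Real.logb_pow, Real.logb_pow] at h1
        push_cast at h1
        linarith
      nlinarith [mul_le_mul_of_nonneg_left hlogm hc]
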